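/- Let p, q ∈ ℕ with p − q ≡ 3 or 7 (mod 8), d = p + q, α = −1 if p − q ≡ 3 (mod 8) and α = +1 if p − q ≡ 7 (mod 8). Let γ₀ : Cl_{p,q} → End_ℝ(S₀) be an elementary real pinor representation and J = γ₀(ω). Let D and D' be two invertible elements of End_ℝ(S₀), each anticommuting with γ₀(ι(v)) for all v ∈ ℝ^d and squaring to α·id, and let ε ∈ {−1, 1}. Let γ⁽²⁾ be the unique unital ℝ-algebra homomorphism Cl(Q'_α) → End_ℝ(S₀) with ι'(e₁) ↦ D and ι'(e₂) ↦ −α·(J ∘ D), and γ'⁽²⁾ the one with ι'(e₁) ↦ D' and ι'(e₂) ↦ −α·((ε·J) ∘ D'). Then γ⁽²⁾ and γ'⁽²⁾ are equivalent representations: there exists an invertible U ∈ End_ℝ(S₀) with γ'⁽²⁾(x) = U ∘ γ⁽²⁾(x) ∘ U⁻¹ for all x ∈ Cl(Q'_α). -/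

import Mathlib

/-- If `D` anticommutes with every element of a list, it commutes with the product
up to the sign `(-1)^length`. -/
private lemma anticomm_list_prod {R : Type*} [Ring R] (D : R) :
    ∀ l : List R, (∀ a ∈ l, D * a = -(a * D)) →
      D * l.prod = (-1 : R) ^ l.length * (l.prod * D) := by
  intro l
  induction l with
  | nil => simp
  | cons a t ih =>
    intro h
    have ha := h a List.mem_cons_self
    have ht := ih fun b hb => h b (List.mem_cons_of_mem a hb)
    simp only [List.prod_cons, List.length_cons, pow_succ]
    rw [← mul_assoc, ha, neg_mul, mul_assoc, ht, ← mul_assoc,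
      ← ((Commute.neg_one_left a).pow_left t.length).eq]
    simp only [mul_assoc, neg_one_mul, mul_neg, neg_mul, one_mul]

open CliffordAlgebra in
/-- In signature `p − q ≡ 3, 7 (mod 8)`, for two conjugations `D`, `D'` and a sign `ε`,
the representations `γ⁽²⁾` of `Cl(Q'_α)` determined by `(D, −α·(J∘D))` and
`(D', −α·((ε·J)∘D'))` are equivalent: they are conjugate by an invertible endomorphism. -/
theorem gamma2_representations_equivalent (p q : ℕ) (α : ℝ)
    (hα : (((p : ℤ) - (q : ℤ)) ≡ 3 [ZMOD 8] ∧ α = -1) ∨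
      (((p : ℤ) - (q : ℤ)) ≡ 7 [ZMOD 8] ∧ α = 1))
    (Q : QuadraticForm ℝ (Fin (p + q) → ℝ))
    (hQ : ∀ x : Fin (p + q) → ℝ,
      Q x = ∑ i : Fin (p + q), (if (i : ℕ) < p then (1 : ℝ) else -1) * x i ^ 2)
    {S₀ : Type*} [AddCommGroup S₀] [Module ℝ S₀] [Nontrivial S₀] [FiniteDimensional ℝ S₀]
    (γ₀ : CliffordAlgebra Q →ₐ[ℝ] Module.End ℝ S₀)
    (hsimple : ∀ W : Submodule ℝ S₀,
      (∀ x : CliffordAlgebra Q, ∀ w ∈ W, γ₀ x w ∈ W) → W = ⊥ ∨ W = ⊤)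
    (J : Module.End ℝ S₀)
    (hJ : J = γ₀ ((List.ofFn fun i : Fin (p + q) =>
      CliffordAlgebra.ι Q (Pi.single i 1)).prod))
    (D D' : Module.End ℝ S₀) (hDu : IsUnit D) (hDu' : IsUnit D')
    (hD1 : ∀ v : Fin (p + q) → ℝ, D * γ₀ (ι Q v) = -(γ₀ (ι Q v) * D))
    (hD2 : D * D = α • (1 : Module.End ℝ S₀))
    (hD1' : ∀ v : Fin (p + q) → ℝ, D' * γ₀ (ι Q v) = -(γ₀ (ι Q v) * D'))
    (hD2' : D' * D' = α • (1 : Module.End ℝ S₀))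
    (ε : ℝ) (hε : ε = 1 ∨ ε = -1)
    (Q₂ : QuadraticForm ℝ (Fin 2 → ℝ))
    (hQ₂ : ∀ x : Fin 2 → ℝ, Q₂ x = α * (x 0 ^ 2 + x 1 ^ 2))
    (γ₂ γ₂' : CliffordAlgebra Q₂ →ₐ[ℝ] Module.End ℝ S₀)
    (hγ₂a : γ₂ (ι Q₂ (Pi.single 0 1)) = D)
    (hγ₂b : γ₂ (ι Q₂ (Pi.single 1 1)) = (-α) • (J * D))
    (hγ₂a' : γ₂' (ι Q₂ (Pi.single 0 1)) = D')
    (hγ₂b' : γ₂' (ι Q₂ (Pi.single 1 1)) = (-α) • ((ε • J) * D')) :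
    ∃ U : (Module.End ℝ S₀)ˣ, ∀ x : CliffordAlgebra Q₂,
      γ₂' x = (U : Module.End ℝ S₀) * γ₂ x * ((U⁻¹ : (Module.End ℝ S₀)ˣ) : Module.End ℝ S₀) := by
  -- basic scalar facts
  have hα2 : α * α = 1 := by rcases hα with ⟨_, h⟩ | ⟨_, h⟩ <;> rw [h] <;> norm_num
  have hε2 : ε * ε = 1 := by rcases hε with h | h <;> rw [h] <;> norm_num
  -- the dimension is odd
  have hd : Odd (p + q) := by
    rw [Nat.odd_iff]
    rcases hα with ⟨h, _⟩ | ⟨h, _⟩ <;>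
    · have h' : ((p : ℤ) - q) % 8 = _ % 8 := h
      omega
  -- notation for the generators
  set g : Fin (p + q) → Module.End ℝ S₀ :=
    fun i => γ₀ (ι Q (Pi.single i 1)) with hg
  have hJg : J = (List.ofFn g).prod := by
    rw [hJ, map_list_prod, List.map_ofFn]
    rfl
  -- D and D' anticommute with J
  have hantiJ : ∀ E : Module.End ℝ S₀,
      (∀ v : Fin (p + q) → ℝ, E * γ₀ (ι Q v) = -(γ₀ (ι Q v) * E)) →
      E * J = -(J * E) := by
    intro E hE
    rw [hJg]
    have := anticomm_list_prod E (List.ofFn g) (by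
      intro a ha
      rw [List.mem_ofFn] at ha
      obtain ⟨i, rfl⟩ := ha
      exact hE _)
    rw [this, List.length_ofFn, hd.neg_one_pow, neg_one_mul]
  have hDJ : D * J = -(J * D) := hantiJ D hD1
  have hDJ' : D' * J = -(J * D') := hantiJ D' hD1'
  -- J is a unit
  have hQe : ∀ i : Fin (p + q), Q (Pi.single i 1) * Q (Pi.single i 1) = 1 := by
    intro i
    have h1 : Q (Pi.single i 1) = if (i : ℕ) < p then 1 else -1 := by
      rw [hQ]
      rw [Finset.sum_eq_single i]
      · simp
      · intro j _ hj
        simp [Pi.single_apply, hj]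
      · simp
    rw [h1]; split_ifs <;> norm_num
  have hgu : ∀ i, IsUnit (g i) := by
    intro i
    have hsq : g i * g i = algebraMap ℝ (Module.End ℝ S₀) (Q (Pi.single i 1)) := by
      rw [hg]
      rw [← map_mul, CliffordAlgebra.ι_sq_scalar, AlgHom.commutes]
    refine ⟨⟨g i, Q (Pi.single i 1) • g i, ?_, ?_⟩, rfl⟩
    · rw [mul_smul_comm, hsq, Algebra.algebraMap_eq_smul_one, smul_smul, hQe, one_smul]
    · rw [smul_mul_assoc, hsq, Algebra.algebraMap_eq_smul_one, smul_smul, hQe, one_smul]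
  have hJu : IsUnit J := by
    rw [hJg]
    refine List.prod_isUnit ?_
    intro m hm
    rw [List.mem_ofFn] at hm
    obtain ⟨i, rfl⟩ := hm
    exact hgu i
  -- the intertwiner candidate T := α • (D' * D) commutes with the image of γ₀ and with J
  have hDDcomm : ∀ X : Module.End ℝ S₀, D * X = -(X * D) → D' * X = -(X * D') →
      (D' * D) * X = X * (D' * D) := by
    intro X h h'
    rw [mul_assoc, h, mul_neg, ← mul_assoc, h', neg_mul, neg_neg, mul_assoc]
  have hTJ : (D' * D) * J = J * (D' * D) := hDDcomm J hDJ hDJ'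
  have hTγ : ∀ x : CliffordAlgebra Q, (D' * D) * γ₀ x = γ₀ x * (D' * D) := by
    intro x
    induction x using CliffordAlgebra.induction with
    | algebraMap r =>
      rw [AlgHom.commutes]
      exact (Algebra.commutes r (D' * D)).symm
    | ι v => exact hDDcomm _ (hD1 v) (hD1' v)
    | mul a b ha hb => rw [map_mul, ← mul_assoc, ha, mul_assoc, hb, mul_assoc]
    | add a b ha hb => rw [map_add, mul_add, add_mul, ha, hb]
  -- Schur: a nonzero endomorphism commuting with the image of γ₀ is a unit
  have schur : ∀ c : Module.End ℝ S₀,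
      (∀ x : CliffordAlgebra Q, c * γ₀ x = γ₀ x * c) → c ≠ 0 → IsUnit c := by
    intro c hc hne
    rw [LinearMap.isUnit_iff_ker_eq_bot]
    rcases hsimple (LinearMap.ker c) (by
      intro x w hw
      rw [LinearMap.mem_ker] at hw ⊢
      have h := congrArg (fun f : Module.End ℝ S₀ => f w) (hc x)
      simp only [Module.End.mul_apply] at h
      rw [h, hw, map_zero]) with h | h
    · exact h
    · exfalso
      apply hne
      ext w
      have : w ∈ LinearMap.ker c := h ▸ Submodule.mem_top
      simpa using this
  -- obtain W a unit with W D = D' W and W J = J W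
  obtain ⟨W, hWu, hWD, hWJ⟩ :
      ∃ W : Module.End ℝ S₀, IsUnit W ∧ W * D = D' * W ∧ W * J = J * W := by
    by_cases hc0 : (1 : Module.End ℝ S₀) + α • (D' * D) = 0
    · -- degenerate case: D' = -D ; take W = J
      have hDD' : D' = -D := by
        have h1 : α • (D' * D) = -1 := by
          rw [← neg_eq_of_add_eq_zero_right hc0]
        have h2 : D' * D = (-α) • 1 := by
          have := congrArg (fun X => α • X) h1
          simpa [smul_smul, hα2, neg_smul] using this
        have h3 : D' * D * D = ((-α) • (1 : Module.End ℝ S₀)) * D := by rw [h2]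
        rw [mul_assoc, hD2, smul_mul_assoc, one_mul, mul_smul_comm, mul_one] at h3
        have := congrArg (fun X => α • X) h3
        simpa [smul_smul, hα2, neg_smul] using this
      refine ⟨J, hJu, ?_, rfl⟩
      rw [hDD', neg_mul, hDJ, neg_neg]
    · refine ⟨1 + α • (D' * D), schur _ ?_ hc0, ?_, ?_⟩
      · intro x
        rw [add_mul, mul_add, one_mul, mul_one, smul_mul_assoc, mul_smul_comm, hTγ]
      · rw [add_mul, one_mul, mul_add, mul_one, smul_mul_assoc, mul_smul_comm,
          mul_assoc, hD2, mul_smul_comm, mul_one, smul_smul, hα2, one_smul,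
          ← mul_assoc, hD2', smul_mul_assoc, one_mul, smul_smul, hα2, one_smul,
          add_comm]
      · rw [add_mul, mul_add, one_mul, mul_one, smul_mul_assoc, mul_smul_comm, hTJ]
  -- build the unit U
  obtain ⟨Wu, hWe⟩ := hWu
  obtain ⟨Du, hDe⟩ := hDu
  suffices main : ∀ U : (Module.End ℝ S₀)ˣ,
      ((U : Module.End ℝ S₀) * D = D' * (U : Module.End ℝ S₀)) →
      (J * (U : Module.End ℝ S₀) = ε • ((U : Module.End ℝ S₀) * J)) →
      ∃ U : (Module.End ℝ S₀)ˣ, ∀ x : CliffordAlgebra Q₂,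
        γ₂' x = (U : Module.End ℝ S₀) * γ₂ x *
          ((U⁻¹ : (Module.End ℝ S₀)ˣ) : Module.End ℝ S₀) by
    rcases hε with h | h
    · refine main Wu ?_ ?_
      · rw [hWe]; exact hWD
      · rw [hWe, h, one_smul]; exact hWJ.symm
    · refine main (Wu * Du) ?_ ?_
      · rw [Units.val_mul, hWe, hDe, mul_assoc, hD2, mul_smul_comm, mul_one,
          ← mul_assoc, ← hWD, mul_assoc, hD2, mul_smul_comm, mul_one]
      · rw [Units.val_mul, hWe, hDe, h, neg_smul, one_smul, ← mul_assoc, ← hWJ,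
          mul_assoc, mul_assoc, hDJ, mul_neg, neg_neg]
  intro U hUD hJU
  -- the intertwining relation
  have key : ∀ x : CliffordAlgebra Q₂,
      γ₂' x * (U : Module.End ℝ S₀) = (U : Module.End ℝ S₀) * γ₂ x := by
    intro x
    induction x using CliffordAlgebra.induction with
    | algebraMap r => rw [AlgHom.commutes, AlgHom.commutes, Algebra.commutes]
    | ι v =>
      have hv : v = v 0 • (Pi.single 0 1 : Fin 2 → ℝ)
          + v 1 • (Pi.single 1 1 : Fin 2 → ℝ) := by
        funext j
        fin_cases j <;> simp [Pi.single_apply]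
      have hb : ((-α) • (ε • J * D')) * (U : Module.End ℝ S₀)
          = (U : Module.End ℝ S₀) * ((-α) • (J * D)) := by
        have h1 : (J * D') * (U : Module.End ℝ S₀)
            = ε • (((U : Module.End ℝ S₀) * J) * D) := by
          rw [mul_assoc, ← hUD, ← mul_assoc, hJU, smul_mul_assoc]
        calc ((-α) • (ε • J * D')) * (U : Module.End ℝ S₀)
            = ((-α) * ε) • ((J * D') * (U : Module.End ℝ S₀)) := by
              simp only [smul_mul_assoc, smul_smul]
          _ = ((-α) * ε) • (ε • (((U : Module.End ℝ S₀) * J) * D)) := by rw [h1]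
          _ = ((-α) * (ε * ε)) • (((U : Module.End ℝ S₀) * J) * D) := by
              rw [smul_smul, mul_assoc]
          _ = (U : Module.End ℝ S₀) * ((-α) • (J * D)) := by
              rw [hε2, mul_one, mul_assoc, mul_smul_comm]
      rw [hv, map_add, map_smul, map_smul, map_add, map_smul, map_smul,
        map_add, map_smul, map_smul, hγ₂a, hγ₂b, hγ₂a', hγ₂b',
        add_mul, mul_add, smul_mul_assoc, smul_mul_assoc, mul_smul_comm,
        mul_smul_comm, hUD, hb]
    | mul a b ha hb =>
      rw [map_mul, map_mul, mul_assoc, hb, ← mul_assoc, ha, mul_assoc]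
    | add a b ha hb => rw [map_add, map_add, add_mul, mul_add, ha, hb]
  refine ⟨U, fun x => ?_⟩
  have := key x
  calc γ₂' x = γ₂' x * (U : Module.End ℝ S₀) * ((U⁻¹ : (Module.End ℝ S₀)ˣ) : Module.End ℝ S₀) := by
        rw [Units.mul_inv_cancel_right]
    _ = (U : Module.End ℝ S₀) * γ₂ x * ((U⁻¹ : (Module.End ℝ S₀)ˣ) : Module.End ℝ S₀) := by
        rw [this]
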